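/- For every integer n ≥ 1 there exists an integer sequence X of length n with nb_peak(X) = ⌊(n−1)/2⌋; hence the maximum number of peaks over all integer sequences of length n is exactly ⌊(n−1)/2⌋. -/

import Mathlib

/-- The signature of an integer sequence: the word over `{<,=,>}` (encoded as
`Ordering.lt`, `Ordering.eq`, `Ordering.gt`) comparing consecutive elements. -/
def signature (X : List ℤ) : List Ordering :=
  List.zipWith compare X X.tail

/-- The number of peaks of a word `w` over `{<,=,>}`: the number of positions `j`
with `w_j = '>'` such that there is `i < j` with `w_i = '<'` and `w_k = '='`
for all `i < k < j`. -/
noncomputable def nbPeak (w : List Ordering) : ℕ :=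
  {j : ℕ | w[j]? = some Ordering.gt ∧
    ∃ i < j, w[i]? = some Ordering.lt ∧
      ∀ k, i < k → k < j → w[k]? = some Ordering.eq}.ncard

def pk (w : List Ordering) : Set ℕ :=
  {j : ℕ | w[j]? = some Ordering.gt ∧
    ∃ i < j, w[i]? = some Ordering.lt ∧
      ∀ k, i < k → k < j → w[k]? = some Ordering.eq}

lemma pk_lt {w : List Ordering} {j : ℕ} (h : j ∈ pk w) : j < w.length := by
  by_contra hc
  have h1 := h.1
  rw [List.getElem?_eq_none (by omega)] at h1
  simp at h1

lemma pk_pos {w : List Ordering} {j : ℕ} (h : j ∈ pk w) : 1 ≤ j := by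
  obtain ⟨-, i, hi, -⟩ := h; omega

lemma pk_gap {w : List Ordering} {j1 j2 : ℕ} (h1 : j1 ∈ pk w) (h2 : j2 ∈ pk w)
    (hlt : j1 < j2) : j1 + 2 ≤ j2 := by
  obtain ⟨hg1, -⟩ := h1
  obtain ⟨-, i, hij, hlt2, heq⟩ := h2
  rcases lt_trichotomy i j1 with h | h | h
  · have := heq j1 h hlt
    rw [hg1] at this; exact absurd this (by simp)
  · subst h; rw [hg1] at hlt2; exact absurd hlt2 (by simp)
  · omega

lemma pk_ncard_le (w : List Ordering) : (pk w).ncard ≤ w.length / 2 := by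
  have : (pk w).ncard ≤ (Set.Iio (w.length / 2)).ncard := by
    apply Set.ncard_le_ncard_of_injOn (fun j => (j - 1) / 2)
    · intro j hj
      have h1 := pk_lt hj
      have h2 := pk_pos hj
      simp only [Set.mem_Iio]; omega
    · intro a ha b hb hab
      dsimp only at hab
      by_contra hne
      rcases Nat.lt_or_ge a b with h | h
      · have := pk_gap ha hb h; have := pk_pos ha; omega
      · have hba : b < a := by omega
        have := pk_gap hb ha hba; have := pk_pos hb; omega
  rwa [← Finset.coe_range, Set.ncard_coe_finset, Finset.card_range] at this

def zig (n : ℕ) : List ℤ := (List.range n).map (fun i => if i % 2 = 0 then 0 else 1)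

lemma zig_get {n i : ℕ} (h : i < n) :
    (zig n)[i]? = some (if i % 2 = 0 then (0:ℤ) else 1) := by
  simp [zig, List.getElem?_map, List.getElem?_range h]

lemma zig_len (n : ℕ) : (zig n).length = n := by simp [zig]

lemma sig_zig_len (n : ℕ) : (signature (zig n)).length = n - 1 := by
  simp [signature, zig]

lemma sig_zig_get {n j : ℕ} (hj : j < n - 1) :
    (signature (zig n))[j]? = some (if j % 2 = 0 then Ordering.lt else Ordering.gt) := by
  have h1 : j < n := by omega
  have h2 : j + 1 < n := by omega
  have ht : (zig n).tail[j]? = some (if (j+1) % 2 = 0 then (0:ℤ) else 1) := by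
    rw [List.getElem?_tail, zig_get h2]
  rw [signature, List.getElem?_zipWith, zig_get h1, ht]
  rcases Nat.mod_two_eq_zero_or_one j with e1 | e1
  · have e2 : (j+1) % 2 = 1 := by omega
    simp [e1, e2, compare]
  · have e2 : (j+1) % 2 = 0 := by omega
    simp [e1, e2, compare]
    decide

lemma pk_zig (n : ℕ) : pk (signature (zig n)) = {j | j < n - 1 ∧ j % 2 = 1} := by
  ext j
  constructor
  · rintro hj
    have hlen := pk_lt hj
    rw [sig_zig_len] at hlen
    obtain ⟨hg, -⟩ := hj
    rw [sig_zig_get hlen] at hg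
    refine ⟨hlen, ?_⟩
    by_contra h
    have : j % 2 = 0 := by omega
    simp [this] at hg
  · rintro ⟨hlen, hodd⟩
    refine ⟨?_, j - 1, by omega, ?_, ?_⟩
    · rw [sig_zig_get hlen]; simp [show j % 2 ≠ 0 by omega]
    · rw [sig_zig_get (by omega)]; simp [show (j-1) % 2 = 0 by omega]
    · intro k h1 h2; omega

lemma card_odd_lt (m : ℕ) : ({j | j < m ∧ j % 2 = 1} : Set ℕ).ncard = m / 2 := by
  have heq : ({j | j < m ∧ j % 2 = 1} : Set ℕ) = (fun k => 2 * k + 1) '' Set.Iio (m / 2) := by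
    ext j
    simp only [Set.mem_setOf_eq, Set.mem_image, Set.mem_Iio]
    constructor
    · rintro ⟨h1, h2⟩; exact ⟨(j - 1) / 2, by omega, by omega⟩
    · rintro ⟨k, hk, rfl⟩; omega
  rw [heq, Set.ncard_image_of_injective _ (fun a b h => by omega),
    ← Finset.coe_range, Set.ncard_coe_finset, Finset.card_range]


/-- For every `n ≥ 1` there is an integer sequence of length `n` with
`⌊(n−1)/2⌋` peaks, and this is the maximum number of peaks over all
integer sequences of length `n`. -/
theorem isGreatest_nbPeak (n : ℕ) (hn : 1 ≤ n) :
    IsGreatest {k : ℕ | ∃ X : List ℤ, X ≠ [] ∧ X.length = n ∧ nbPeak (signature X) = k}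
      ((n - 1) / 2) := by
  constructor
  · refine ⟨zig n, ?_, zig_len n, ?_⟩
    · intro h
      have := zig_len n
      rw [h] at this
      simp at this; omega
    · show (pk (signature (zig n))).ncard = (n - 1) / 2
      rw [pk_zig, card_odd_lt]
  · rintro k ⟨X, hne, hlen, rfl⟩
    have h := pk_ncard_le (signature X)
    have hl : (signature X).length = n - 1 := by
      simp [signature]
      omega
    rw [hl] at h
    exact h
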